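/- arXiv:1504.01341 — 5 statements merged into one kernel-verified Lean document; each statement's English description precedes it below -/
import Mathlib

section
/- Let F be a field of characteristic p > 0, R an F-algebra, and D a derivation on R. Then for every a ∈ R and every natural number m, D^{p^m}(a) = x^{p^m}·a − a·x^{p^m} in the differential polynomial ring R[x;D]. -/
/-- Over a field of characteristic `p > 0`, in the differential polynomial ring `R[x;D]`,
`D^{p^m}(a) = x^{p^m}·a − a·x^{p^m}`. -/
theorem stmt_2 {F : Type*} [Field F] (p : ℕ) [Fact p.Prime] [CharP F p]
    {R T : Type*} [NonUnitalRing R] [Module F R] [SMulCommClass F R R] [IsScalarTower F R R]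
    [Ring T] [Algebra F T]
    (D : R → R) (hadd : ∀ a b : R, D (a + b) = D a + D b)
    (hsmul : ∀ (c : F) (a : R), D (c • a) = c • D a)
    (hleib : ∀ a b : R, D (a * b) = D a * b + a * D b)
    (ι : R →ₙₐ[F] T) (x : T)
    (hx : ∀ a : R, x * ι a - ι a * x = ι (D a))
    (a : R) (m : ℕ) :
    ι (D^[p ^ m] a) = x ^ (p ^ m) * ι a - ι a * x ^ (p ^ m) := by
  rcases subsingleton_or_nontrivial T with hT | hT
  · exact Subsingleton.elim _ _
  haveI : CharP T p := charP_of_injective_algebraMap (algebraMap F T).injective p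
  haveI : CharP (AddMonoid.End T) p := by
    constructor
    intro n
    rw [← CharP.cast_eq_zero_iff T p n]
    constructor
    · intro h
      have := congrArg (fun f : AddMonoid.End T => f 1) h
      simpa [AddMonoid.End.natCast_apply, nsmul_eq_mul] using this
    · intro h
      refine AddMonoidHom.ext fun t => ?_
      show (n : AddMonoid.End T) t = (0 : AddMonoid.End T) t
      rw [AddMonoid.End.natCast_apply, nsmul_eq_mul, h, zero_mul]
      rfl
  set L : AddMonoid.End T := AddMonoidHom.mulLeft x with hL
  set Rr : AddMonoid.End T := AddMonoidHom.mulRight x with hRr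
  have hcomm : Commute L Rr := by
    refine AddMonoidHom.ext fun t => ?_
    show x * (t * x) = (x * t) * x
    rw [mul_assoc]
  have hLpow : ∀ (n : ℕ) (t : T), (L ^ n) t = x ^ n * t := by
    intro n
    induction n with
    | zero => simp
    | succ k ih =>
        intro t
        have : (L ^ (k + 1)) t = (L ^ k) (L t) := by rw [pow_succ]; rfl
        rw [this, ih, pow_succ]
        show x ^ k * (x * t) = x ^ k * x * t
        rw [mul_assoc]
  have hRpow : ∀ (n : ℕ) (t : T), (Rr ^ n) t = t * x ^ n := by
    intro n
    induction n with
    | zero => simp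
    | succ k ih =>
        intro t
        have : (Rr ^ (k + 1)) t = (Rr ^ k) (Rr t) := by rw [pow_succ]; rfl
        rw [this, ih, pow_succ]
        show t * x * x ^ k = t * (x ^ k * x)
        rw [mul_assoc, (Commute.pow_self x k).eq]
  have hiter : ∀ n : ℕ, ((L - Rr) ^ n) (ι a) = ι (D^[n] a) := by
    intro n
    induction n with
    | zero => simp
    | succ k ih =>
        have h1 : ((L - Rr) ^ (k + 1)) (ι a) = (L - Rr) (((L - Rr) ^ k) (ι a)) := by
          rw [pow_succ']; rfl
        rw [h1, ih, Function.iterate_succ_apply', ← hx (D^[k] a)]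
        rfl
  have key := sub_pow_char_pow_of_commute (n := m) (p := p) hcomm
  have := congrArg (fun f : AddMonoid.End T => f (ι a)) key
  rw [hiter (p ^ m)] at this
  rw [this]
  show (L ^ p ^ m) (ι a) - (Rr ^ p ^ m) (ι a) = _
  rw [hLpow, hRpow]
end

section
/- Let F be a field of characteristic p > 0, R an F-algebra, and D a locally nilpotent derivation on R (for every a ∈ R there is n with D^n(a) = 0). If the differential polynomial ring R[x;D] is Jacobson radical, then R is a nil ring. -/
/-- Let `F` be a field of characteristic `p > 0`, `R` an `F`-algebra and `D` a locally
nilpotent derivation on `R`.  The differential polynomial ring `R[x;D]` is represented as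
the set `S` of all `∑ ι(c_i) x^i` inside an ambient `F`-algebra `T`, with
`x·a − a·x = D a` and the powers of `x` left-independent over `R`.
If `R[x;D]` is Jacobson radical (every element of `S` is quasi-invertible in `S`),
then `R` is nil. -/
theorem stmt_5 {F : Type*} [Field F] (p : ℕ) [Fact p.Prime] [CharP F p]
    {R T : Type*} [NonUnitalRing R] [Module F R] [SMulCommClass F R R] [IsScalarTower F R R]
    [Ring T] [Algebra F T]
    (D : R → R) (hadd : ∀ a b : R, D (a + b) = D a + D b)
    (hsmul : ∀ (c : F) (a : R), D (c • a) = c • D a)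
    (hleib : ∀ a b : R, D (a * b) = D a * b + a * D b)
    (hln : ∀ a : R, ∃ n : ℕ, D^[n] a = 0)
    (ι : R →ₙₐ[F] T) (hι : Function.Injective ι) (x : T)
    (hx : ∀ a : R, x * ι a - ι a * x = ι (D a))
    (S : Set T)
    (hS : S = {t : T | ∃ (n : ℕ) (c : ℕ → R),
      t = ∑ i ∈ Finset.range (n + 1), ι (c i) * x ^ i})
    (hfree : ∀ (n : ℕ) (c : ℕ → R),
      (∑ i ∈ Finset.range (n + 1), ι (c i) * x ^ i) = 0 → ∀ i ≤ n, c i = 0)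
    (hjac : ∀ t ∈ S, ∃ s ∈ S, t + s + t * s = 0 ∧ t + s + s * t = 0) :
    ∀ a : R, ∃ n : ℕ, 0 < n ∧ ι a ^ n = 0 := by
  intro a
  rcases subsingleton_or_nontrivial T with hT | hT
  · exact ⟨1, one_pos, Subsingleton.elim _ _⟩
  haveI : CharP T p := charP_of_injective_algebraMap (algebraMap F T).injective p
  -- basic facts about D
  have hD0 : D 0 = 0 := by
    have h : D 0 + 0 = D 0 + D 0 := by rw [add_zero]; simpa using hadd 0 0
    exact (add_left_cancel h).symm
  have hDit0 : ∀ N : ℕ, D^[N] (0 : R) = 0 := fun N => Function.iterate_fixed hD0 N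
  have hDitadd : ∀ (N : ℕ) (u v : R), D^[N] (u + v) = D^[N] u + D^[N] v := by
    intro N
    induction N with
    | zero => intro u v; simp
    | succ N ih =>
      intro u v
      rw [Function.iterate_succ_apply', Function.iterate_succ_apply',
        Function.iterate_succ_apply', ih, hadd]
  have hDneg : ∀ u : R, D (-u) = -D u := by
    intro u
    have h := hadd u (-u)
    rw [add_neg_cancel, hD0] at h
    exact (neg_eq_of_add_eq_zero_right h.symm).symm
  have hDitneg : ∀ (N : ℕ) (u : R), D^[N] (-u) = -D^[N] u := by
    intro N
    induction N with
    | zero => intro u; simp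
    | succ N ih =>
      intro u
      rw [Function.iterate_succ_apply', Function.iterate_succ_apply', ih, hDneg]
  have hDitsub : ∀ (N : ℕ) (u v : R), D^[N] (u - v) = D^[N] u - D^[N] v := by
    intro N u v
    rw [sub_eq_add_neg, hDitadd, hDitneg, sub_eq_add_neg]
  have hDitge : ∀ (u : R) (N K : ℕ), D^[N] u = 0 → N ≤ K → D^[K] u = 0 := by
    intro u N K h hK
    have hKeq : K = (K - N) + N := (Nat.sub_add_cancel hK).symm
    rw [hKeq, Function.iterate_add_apply, h, hDit0]
  -- the commutator operator lemma
  haveI : CharP (AddMonoid.End T) p := by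
    constructor
    intro N
    rw [← CharP.cast_eq_zero_iff T p N]
    constructor
    · intro h
      have h1 := congrArg (fun f : AddMonoid.End T => f 1) h
      simpa [AddMonoid.End.natCast_apply, nsmul_eq_mul] using h1
    · intro h
      refine DFunLike.ext _ _ fun b => ?_
      show (N : ℕ) • b = (0 : AddMonoid.End T) b
      rw [nsmul_eq_mul, h, zero_mul]
      rfl
  set l : AddMonoid.End T := AddMonoidHom.mulLeft x with hldef
  set r : AddMonoid.End T := AddMonoidHom.mulRight x with hrdef
  have hlb : ∀ b : T, l b = x * b := fun b => rfl
  have hrb : ∀ b : T, r b = b * x := fun b => rfl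
  have hsubb : ∀ b : T, (l - r) b = x * b - b * x := fun b => rfl
  have hcl : Commute l r := by
    refine DFunLike.ext _ _ fun b => ?_
    show l (r b) = r (l b)
    rw [hlb, hrb, hlb, hrb, mul_assoc]
  have hcoe : ∀ (f : AddMonoid.End T) (N : ℕ) (b : T), (f ^ N) b = (⇑f)^[N] b :=
    fun f N b => congrFun (AddMonoid.End.coe_pow T f N) b
  have hlpow : ∀ (N : ℕ) (b : T), (l ^ N) b = x ^ N * b := by
    intro N
    induction N with
    | zero => intro b; rw [hcoe]; simp
    | succ N ih =>
      intro b
      rw [hcoe, Function.iterate_succ_apply', ← hcoe, ih, hlb, ← mul_assoc, ← pow_succ']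
  have hrpow : ∀ (N : ℕ) (b : T), (r ^ N) b = b * x ^ N := by
    intro N
    induction N with
    | zero => intro b; rw [hcoe]; simp
    | succ N ih =>
      intro b
      rw [hcoe, Function.iterate_succ_apply', ← hcoe, ih, hrb, mul_assoc, ← pow_succ]
  have hsubpow : ∀ (N : ℕ) (b : T),
      ((l - r) ^ N) b = (fun c => x * c - c * x)^[N] b := by
    intro N b
    rw [hcoe]
    have hfun : ⇑(l - r) = fun c => x * c - c * x := funext hsubb
    rw [hfun]
  have hadj : ∀ (N : ℕ) (c : R), (fun c => x * c - c * x)^[N] (ι c) = ι (D^[N] c) := by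
    intro N
    induction N with
    | zero => intro c; simp
    | succ N ih =>
      intro c
      rw [Function.iterate_succ_apply', ih, hx, Function.iterate_succ_apply' D N c]
  have hcomm : ∀ (k : ℕ) (c : R), x ^ p ^ k * ι c - ι c * x ^ p ^ k = ι (D^[p ^ k] c) := by
    intro k c
    have key := sub_pow_char_pow_of_commute (p := p) (n := k) hcl
    have h1 := congrArg (fun f : AddMonoid.End T => f (ι c)) key
    have hsub2 : ∀ (f g : AddMonoid.End T) (b : T), (f - g) b = f b - g b := fun f g b => rfl
    rw [hsub2, hlpow, hrpow, hsubpow, hadj] at h1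
    exact h1.symm
  -- characteristic-p Leibniz rule for D^[p^k]
  have hDq_mul : ∀ (k : ℕ) (u v : R),
      D^[p ^ k] (u * v) = D^[p ^ k] u * v + u * D^[p ^ k] v := by
    intro k u v
    apply hι
    rw [map_add, map_mul, map_mul, ← hcomm k (u * v), ← hcomm k u, ← hcomm k v, map_mul]
    noncomm_ring
  -- set up q
  obtain ⟨n, hn⟩ := hln a
  set q := p ^ n with hqdef
  have hq0 : 0 < q := pow_pos (Fact.out (p := p.Prime)).pos n
  have hnq : n ≤ q := Nat.le_of_lt (Nat.lt_pow_self (n := n) (Fact.out (p := p.Prime)).one_lt)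
  have hDqa : D^[q] a = 0 := hDitge a n q hn hnq
  have hqmul : ∀ u v : R, D^[q] (u * v) = D^[q] u * v + u * D^[q] v := hDq_mul n
  -- key vanishing lemmas
  have L1 : ∀ u : R, u + a * D^[q] u = 0 → u = 0 := by
    intro u hu
    have hrel : ∀ s : ℕ, D^[s * q] u + a * D^[(s + 1) * q] u = 0 := by
      intro s
      induction s with
      | zero => simpa using hu
      | succ s ih =>
        have h2 : D^[q] (D^[s * q] u + a * D^[(s + 1) * q] u) = D^[q] (0 : R) := by rw [ih]
        rw [hDit0, hDitadd, hqmul, hDqa, zero_mul, zero_add,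
          ← Function.iterate_add_apply, ← Function.iterate_add_apply] at h2
        have e1 : (s + 1) * q = q + s * q := by ring
        have e2 : (s + 1 + 1) * q = q + (s + 1) * q := by ring
        rw [e1, e2]
        exact h2
    obtain ⟨nu, hnu⟩ := hln u
    have hstep : ∀ s : ℕ, D^[(s + 1) * q] u = 0 → D^[s * q] u = 0 := by
      intro s h
      have h3 := hrel s
      rw [h, mul_zero, add_zero] at h3
      exact h3
    have hbig : D^[nu * q] u = 0 :=
      hDitge u nu (nu * q) hnu (Nat.le_mul_of_pos_right nu hq0)
    have hdown : ∀ j : ℕ, D^[(nu - j) * q] u = 0 := by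
      intro j
      induction j with
      | zero => simpa using hbig
      | succ j ih =>
        rcases le_or_gt nu (j + 1) with h | h
        · have he : nu - (j + 1) = 0 := by omega
          rcases le_or_gt nu j with h' | h'
          · have he2 : nu - j = 0 := by omega
            rw [he, ← he2]; exact ih
          · apply hstep
            rw [show nu - (j + 1) + 1 = nu - j by omega]
            exact ih
        · apply hstep
          rw [show nu - (j + 1) + 1 = nu - j by omega]
          exact ih
      
    have hfin := hdown nu
    simpa using hfin
  have L2 : ∀ u w : R, u + a * D^[q] u = w → D^[q] w = 0 → u = w := by
    intro u w h hw
    have h0 : (u - w) + a * D^[q] (u - w) = 0 := by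
      rw [hDitsub, hw, sub_zero, ← h]
      abel
    exact sub_eq_zero.mp (L1 _ h0)
  -- delta sums
  have hdelta : ∀ (N : ℕ) (b : R), q ≤ N →
      ∑ i ∈ Finset.range (N + 1), ι (if i = q then b else 0) * x ^ i = ι b * x ^ q := by
    intro N b hN
    rw [Finset.sum_eq_single q]
    · simp
    · intro i _ hiq; simp [hiq]
    · intro h
      exact absurd (Finset.mem_range.mpr (by omega)) h
  -- t is in S
  have htS : ι a * x ^ q ∈ S := by
    rw [hS]
    exact ⟨q, fun i => if i = q then a else 0, (hdelta q a le_rfl).symm⟩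
  obtain ⟨s, hsS, hqi, -⟩ := hjac _ htS
  rw [hS] at hsS
  obtain ⟨m, c, rfl⟩ := hsS
  -- commutation of x^q past coefficients
  have hxq : ∀ b : R, x ^ q * ι b = ι b * x ^ q + ι (D^[q] b) := by
    intro b
    have h := hcomm n b
    rw [← h]
    abel
  -- expansion of t * s
  have hts : (ι a * x ^ q) * (∑ i ∈ Finset.range (m + 1), ι (c i) * x ^ i)
      = (∑ i ∈ Finset.range (m + 1), ι (a * c i) * x ^ (q + i))
        + ∑ i ∈ Finset.range (m + 1), ι (a * D^[q] (c i)) * x ^ i := by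
    rw [Finset.mul_sum, ← Finset.sum_add_distrib]
    refine Finset.sum_congr rfl fun i _ => ?_
    rw [show ι a * x ^ q * (ι (c i) * x ^ i) = ι a * (x ^ q * ι (c i)) * x ^ i by
      noncomm_ring]
    rw [hxq, map_mul, map_mul, pow_add]
    noncomm_ring
  -- truncated sums
  have hguard : ∀ (g : ℕ → R),
      ∑ i ∈ Finset.range (q + m + 1), ι (if i ≤ m then g i else 0) * x ^ i
        = ∑ i ∈ Finset.range (m + 1), ι (g i) * x ^ i := by
    intro g
    have hsub : Finset.range (m + 1) ⊆ Finset.range (q + m + 1) :=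
      Finset.range_subset_range.mpr (by omega)
    rw [← Finset.sum_subset hsub (fun i _ hi => by
      rw [if_neg (fun h => hi (Finset.mem_range.mpr (by omega)))]
      simp)]
    exact Finset.sum_congr rfl fun i hi => by
      rw [if_pos (Nat.lt_succ_iff.mp (Finset.mem_range.mp hi))]
  have hS3 : ∑ i ∈ Finset.range (q + m + 1),
        ι (if q ≤ i ∧ i - q ≤ m then a * c (i - q) else 0) * x ^ i
      = ∑ i ∈ Finset.range (m + 1), ι (a * c i) * x ^ (q + i) := by
    have h1 : ∑ i ∈ Finset.Ico 0 q,
        ι (if q ≤ i ∧ i - q ≤ m then a * c (i - q) else 0) * x ^ i = 0 := by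
      refine Finset.sum_eq_zero fun i hi => ?_
      rw [Finset.mem_Ico] at hi
      rw [if_neg (fun h => absurd h.1 (by omega))]
      simp
    calc ∑ i ∈ Finset.range (q + m + 1),
          ι (if q ≤ i ∧ i - q ≤ m then a * c (i - q) else 0) * x ^ i
        = ∑ i ∈ Finset.Ico 0 (q + (m + 1)),
            ι (if q ≤ i ∧ i - q ≤ m then a * c (i - q) else 0) * x ^ i := by
          rw [← Finset.range_eq_Ico]; congr 1
      _ = (∑ i ∈ Finset.Ico 0 q,
            ι (if q ≤ i ∧ i - q ≤ m then a * c (i - q) else 0) * x ^ i)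
          + ∑ i ∈ Finset.Ico q (q + (m + 1)),
            ι (if q ≤ i ∧ i - q ≤ m then a * c (i - q) else 0) * x ^ i :=
          (Finset.sum_Ico_consecutive _ (Nat.zero_le q) (Nat.le_add_right q (m + 1))).symm
      _ = ∑ i ∈ Finset.Ico q (q + (m + 1)),
            ι (if q ≤ i ∧ i - q ≤ m then a * c (i - q) else 0) * x ^ i := by
          rw [h1, zero_add]
      _ = ∑ i ∈ Finset.range (q + (m + 1) - q),
            ι (if q ≤ q + i ∧ q + i - q ≤ m then a * c (q + i - q) else 0) * x ^ (q + i) :=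
          Finset.sum_Ico_eq_sum_range _ q (q + (m + 1))
      _ = ∑ i ∈ Finset.range (m + 1), ι (a * c i) * x ^ (q + i) := by
          have he : q + (m + 1) - q = m + 1 := by omega
          rw [he]
          refine Finset.sum_congr rfl fun i hi => ?_
          rw [Finset.mem_range] at hi
          rw [if_pos ⟨Nat.le_add_right q i, by rw [Nat.add_sub_cancel_left]; omega⟩,
            Nat.add_sub_cancel_left]
  -- the main identity
  have hmain0 : ∑ i ∈ Finset.range (q + m + 1),
      ι ((if i = q then a else 0) + (if i ≤ m then c i + a * D^[q] (c i) else 0)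
        + (if q ≤ i ∧ i - q ≤ m then a * c (i - q) else 0)) * x ^ i = 0 := by
    have expand : ∀ i ∈ Finset.range (q + m + 1),
        ι ((if i = q then a else 0) + (if i ≤ m then c i + a * D^[q] (c i) else 0)
          + (if q ≤ i ∧ i - q ≤ m then a * c (i - q) else 0)) * x ^ i
        = ι (if i = q then a else 0) * x ^ i
          + ι (if i ≤ m then c i + a * D^[q] (c i) else 0) * x ^ i
          + ι (if q ≤ i ∧ i - q ≤ m then a * c (i - q) else 0) * x ^ i := by
      intro i _
      rw [map_add, map_add, add_mul, add_mul]
    rw [Finset.sum_congr rfl expand, Finset.sum_add_distrib, Finset.sum_add_distrib,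
      hdelta _ a (by omega), hguard, hS3]
    have hsplit2 : ∑ i ∈ Finset.range (m + 1), ι (c i + a * D^[q] (c i)) * x ^ i
        = (∑ i ∈ Finset.range (m + 1), ι (c i) * x ^ i)
          + ∑ i ∈ Finset.range (m + 1), ι (a * D^[q] (c i)) * x ^ i := by
      rw [← Finset.sum_add_distrib]
      exact Finset.sum_congr rfl fun i _ => by rw [map_add, add_mul]
    rw [hsplit2]
    rw [hts] at hqi
    refine Eq.trans ?_ hqi
    abel
  have E := hfree (q + m) _ hmain0
  -- the chain of coefficients
  have claim : ∀ j : ℕ, j ≤ m / q →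
      ι (c (j * q)) = (if j = 0 then 0 else (-(ι a)) ^ j) ∧ D^[q] (c (j * q)) = 0 := by
    intro j
    induction j with
    | zero =>
      intro _
      have h0 := E 0 (Nat.zero_le _)
      rw [if_neg (by omega), if_pos (Nat.zero_le m),
        if_neg (fun h => absurd h.1 (by omega))] at h0
      have hc0 : c 0 + a * D^[q] (c 0) = 0 := by
        rw [zero_add, add_zero] at h0
        exact h0
      have hz := L1 _ hc0
      constructor
      · simp [Nat.zero_mul, hz]
      · simp [Nat.zero_mul, hz, hDit0]
    | succ j ih =>
      intro hj
      obtain ⟨ih1, ih2⟩ := ih (by omega)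
      have hij : (j + 1) * q ≤ m :=
        le_trans (Nat.mul_le_mul_right q hj) (Nat.div_mul_le_self m q)
      have hiq : (j + 1) * q - q = j * q := by
        rw [Nat.succ_mul, Nat.add_sub_cancel]
      have hE := E ((j + 1) * q) (le_trans hij (Nat.le_add_left m q))
      have hthird : q ≤ (j + 1) * q ∧ (j + 1) * q - q ≤ m :=
        ⟨Nat.le_mul_of_pos_left q (Nat.succ_pos j), by
          rw [hiq]
          exact le_trans (Nat.mul_le_mul_right q (Nat.le_succ j)) hij⟩
      rw [if_pos hij, if_pos hthird, hiq] at hE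
      rcases Nat.eq_zero_or_pos j with rfl | hjpos
      · rw [if_pos (show (0 + 1) * q = q by ring)] at hE
        have hc00 : c (0 * q) = 0 := by
          apply hι
          rw [ih1, if_pos rfl, map_zero]
        rw [hc00, mul_zero, add_zero] at hE
        have hu := eq_neg_of_add_eq_zero_right hE
        have hwD : D^[q] (-a : R) = 0 := by rw [hDitneg, hDqa, neg_zero]
        have huw := L2 _ _ hu hwD
        constructor
        · rw [huw, map_neg, if_neg (Nat.succ_ne_zero 0), pow_succ, pow_zero, one_mul]
        · rw [huw, hwD]
      · have hne : ¬((j + 1) * q = q) := fun h => by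
          have h2 : (j + 1) * q = 1 * q := by rw [h, Nat.one_mul]
          have h3 := Nat.eq_of_mul_eq_mul_right hq0 h2
          omega
        rw [if_neg hne, zero_add] at hE
        have hu := eq_neg_of_add_eq_zero_left hE
        have hwD : D^[q] (-(a * c (j * q))) = 0 := by
          rw [hDitneg, hqmul, hDqa, ih2, zero_mul, mul_zero, add_zero, neg_zero]
        have huw := L2 _ _ hu hwD
        constructor
        · rw [huw, map_neg, map_mul, ih1, if_neg (by omega), if_neg (by omega),
            ← neg_mul, ← pow_succ']
        · rw [huw, hwD]
  -- conclusion
  obtain ⟨h1, h2⟩ := claim (m / q) le_rfl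
  have hdm := Nat.div_add_mod m q
  have hmod := Nat.mod_lt m hq0
  have e1 : (m / q + 1) * q = q * (m / q) + q := by ring
  have hij : ¬((m / q + 1) * q ≤ m) := by
    intro hle
    rw [e1] at hle
    omega
  have hle2 : (m / q + 1) * q ≤ q + m := by
    have h3 : m / q * q ≤ m := Nat.div_mul_le_self m q
    have e2 : (m / q + 1) * q = m / q * q + q := by ring
    omega
  have hE := E ((m / q + 1) * q) hle2
  have hiq2 : (m / q + 1) * q - q = m / q * q := by
    rw [Nat.succ_mul, Nat.add_sub_cancel]
  have hthird : q ≤ (m / q + 1) * q ∧ (m / q + 1) * q - q ≤ m :=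
    ⟨Nat.le_mul_of_pos_left q (Nat.succ_pos _), by
      rw [hiq2]; exact Nat.div_mul_le_self m q⟩
  rw [if_neg hij, if_pos hthird, hiq2, add_zero] at hE
  rcases Nat.eq_zero_or_pos (m / q) with hd0 | hdpos
  · rw [hd0] at hE h1
    rw [if_pos (show (0 + 1) * q = q by ring)] at hE
    rw [if_pos rfl] at h1
    have h4 := congrArg ι hE
    rw [map_add, map_mul, h1, mul_zero, add_zero, map_zero] at h4
    exact ⟨1, one_pos, by rw [pow_one]; exact h4⟩
  · have hne : ¬((m / q + 1) * q = q) := fun h => by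
      have hh2 : (m / q + 1) * q = 1 * q := by rw [h, Nat.one_mul]
      have hh3 := Nat.eq_of_mul_eq_mul_right hq0 hh2
      omega
    rw [if_neg hne, zero_add] at hE
    rw [if_neg (by omega)] at h1
    have h3 := congrArg ι hE
    rw [map_mul, h1, map_zero] at h3
    have hz : (-(ι a)) ^ (m / q + 1) = 0 := by
      rw [pow_succ', neg_mul, h3, neg_zero]
    have hnp : (ι a) ^ (m / q + 1) = (-1 : T) ^ (m / q + 1) * (-(ι a)) ^ (m / q + 1) := by
      have hn := neg_pow (-(ι a)) (m / q + 1)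
      rw [neg_neg] at hn
      exact hn
    exact ⟨m / q + 1, by omega, by rw [hnp, hz, mul_zero]⟩
end

section
/- Let F be a field of characteristic p > 0, R an F-algebra, and D a locally nilpotent derivation on R. Suppose a ∈ R and m is such that D^{p^m}(a) = 0. If a·x^{p^m} is quasi-invertible in R[x;D] and there exists a subring containing a on which D is nilpotent containing the quasi-inverse, then a is nilpotent. -/
/-- Let `F` be a field of characteristic `p > 0`, `R` an `F`-algebra, `D` a locally nilpotent
derivation on `R`.  Represent `R[x;D]` inside an ambient `F`-algebra `T` as usual.
Suppose `a ∈ R`, `m` satisfies `D^{p^m}(a) = 0`, the element `a·x^{p^m}` is quasi-invertible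
in `R[x;D]` with quasi-inverse `s = ∑ ι(c_i) x^i`, and there is a subring `T'` of `R`
containing `a` and all coefficients `c_i` on which `D` is nilpotent.
Then `a` is nilpotent. -/
theorem stmt_6 {F : Type*} [Field F] (p : ℕ) [Fact p.Prime] [CharP F p]
    {R T : Type*} [NonUnitalRing R] [Module F R] [SMulCommClass F R R] [IsScalarTower F R R]
    [Ring T] [Algebra F T]
    (D : R → R) (hadd : ∀ a b : R, D (a + b) = D a + D b)
    (hsmul : ∀ (c : F) (a : R), D (c • a) = c • D a)
    (hleib : ∀ a b : R, D (a * b) = D a * b + a * D b)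
    (hln : ∀ a : R, ∃ n : ℕ, D^[n] a = 0)
    (ι : R →ₙₐ[F] T) (hι : Function.Injective ι) (x : T)
    (hx : ∀ a : R, x * ι a - ι a * x = ι (D a))
    (hfree : ∀ (n : ℕ) (c : ℕ → R),
      (∑ i ∈ Finset.range (n + 1), ι (c i) * x ^ i) = 0 → ∀ i ≤ n, c i = 0)
    (a : R) (m : ℕ) (ha : D^[p ^ m] a = 0)
    (s : T)
    (hq1 : ι a * x ^ (p ^ m) + s + (ι a * x ^ (p ^ m)) * s = 0)
    (hq2 : ι a * x ^ (p ^ m) + s + s * (ι a * x ^ (p ^ m)) = 0)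
    (n : ℕ) (c : ℕ → R) (hs : s = ∑ i ∈ Finset.range (n + 1), ι (c i) * x ^ i)
    (T' : NonUnitalSubring R) (haT' : a ∈ T') (hcT' : ∀ i, c i ∈ T')
    (hnilD : ∃ N : ℕ, ∀ r ∈ T', D^[N] r = 0) :
    ∃ k : ℕ, 0 < k ∧ ι a ^ k = 0 := by
  classical
  rcases subsingleton_or_nontrivial T with hT | hT
  · exact ⟨1, one_pos, Subsingleton.elim _ _⟩
  obtain ⟨N, hN⟩ := hnilD
  have hp2 : 2 ≤ p := (Fact.out : p.Prime).two_le
  haveI : CharP T p := charP_of_injective_algebraMap (algebraMap F T).injective p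
  haveI : CharP (Module.End F T) p := by
    refine charP_of_injective_algebraMap (R := F) ?_ p
    intro c' d' h
    have h1 : algebraMap F T c' = algebraMap F T d' := by
      have h2 := congrArg (fun f : Module.End F T => f (1 : T)) h
      simpa [Module.algebraMap_end_apply, Algebra.algebraMap_eq_smul_one] using h2
    exact (algebraMap F T).injective h1
  -- derivation basics
  have hD0 : D 0 = 0 := by
    have h := hadd 0 0
    rw [add_zero] at h
    exact (left_eq_add.mp h)
  have hDit0 : ∀ j, D^[j] 0 = 0 := fun j => Function.iterate_fixed hD0 j
  have hDneg : ∀ r, D (-r) = -(D r) := by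
    intro r
    have h := hadd r (-r)
    rw [add_neg_cancel, hD0] at h
    exact (neg_eq_of_add_eq_zero_right h.symm).symm
  have hDitneg : ∀ (j : ℕ) (r : R), D^[j] (-r) = -(D^[j] r) := by
    intro j
    induction j with
    | zero => intro r; simp
    | succ j ih =>
      intro r
      rw [Function.iterate_succ_apply, Function.iterate_succ_apply, hDneg, ih]
  have hDle : ∀ (r : R) (i j : ℕ), i ≤ j → D^[i] r = 0 → D^[j] r = 0 := by
    intro r i j hij h0
    rw [← Nat.sub_add_cancel hij, Function.iterate_add_apply, h0, hDit0]
  -- the key char-p commutation lemma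
  have key : ∀ (t : ℕ) (r : R), D^[p ^ t] r = 0 → x ^ p ^ t * ι r = ι r * x ^ p ^ t := by
    intro t r hr
    set L := LinearMap.mulLeft F x with hL
    set Rr := LinearMap.mulRight F x with hR
    have hC : Commute (L - Rr) Rr :=
      (LinearMap.commute_mulLeft_right x x).sub_left (Commute.refl Rr)
    have hsplit : L ^ p ^ t = (L - Rr) ^ p ^ t + Rr ^ p ^ t := by
      have h := add_pow_char_pow_of_commute p t hC
      rwa [sub_add_cancel] at h
    have h1 : ∀ w : R, (L - Rr) (ι w) = ι (D w) := by
      intro w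
      simp only [hL, hR, LinearMap.sub_apply, LinearMap.mulLeft_apply,
        LinearMap.mulRight_apply]
      exact hx w
    have had : ∀ (j : ℕ) (w : R), ((L - Rr) ^ j) (ι w) = ι (D^[j] w) := by
      intro j
      induction j with
      | zero => intro w; simp
      | succ j ih =>
        intro w
        rw [pow_succ', Module.End.mul_apply, ih, h1, Function.iterate_succ_apply']
    have h2 : (L ^ p ^ t) (ι r) = x ^ p ^ t * ι r := by
      rw [hL, LinearMap.pow_mulLeft, LinearMap.mulLeft_apply]
    have h3 : (Rr ^ p ^ t) (ι r) = ι r * x ^ p ^ t := by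
      rw [hR, LinearMap.pow_mulRight, LinearMap.mulRight_apply]
    calc x ^ p ^ t * ι r = (L ^ p ^ t) (ι r) := h2.symm
      _ = ((L - Rr) ^ p ^ t + Rr ^ p ^ t) (ι r) := by rw [hsplit]
      _ = ((L - Rr) ^ p ^ t) (ι r) + (Rr ^ p ^ t) (ι r) := LinearMap.add_apply _ _ _
      _ = ι (D^[p ^ t] r) + ι r * x ^ p ^ t := by rw [had, h3]
      _ = ι r * x ^ p ^ t := by rw [hr, map_zero, zero_add]
  -- setup
  set q := p ^ m with hqdef
  clear_value q
  have hqpos : 0 < q := by rw [hqdef]; exact pow_pos (by omega) m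
  set b := -a with hbdef
  clear_value b
  have hb : ι b = -(ι a) := by rw [hbdef]; exact map_neg ι a
  have hDb : D^[q] b = 0 := by rw [hbdef, hDitneg, ha, neg_zero]
  have hbT' : b ∈ T' := by rw [hbdef]; exact neg_mem haT'
  set v : T := ι b * x ^ q with hvdef
  clear_value v
  have hsv : s = v + v * s := by
    have hv' : v = -(ι a * x ^ q) := by rw [hvdef, hb, neg_mul]
    have h0 : (ι a * x ^ q + (ι a * x ^ q) * s) + s = 0 := by rw [← hq1]; abel
    have h1 : s = -(ι a * x ^ q + (ι a * x ^ q) * s) := eq_neg_of_add_eq_zero_right h0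
    rw [hv', neg_mul]
    nth_rewrite 1 [h1]
    rw [neg_add]
  -- powers of b inside R
  set pw : ℕ → R := fun i => Nat.rec b (fun _ r => r * b) i with hpw
  have hpw0 : pw 0 = b := rfl
  have hpwS : ∀ i, pw (i + 1) = pw i * b := fun i => rfl
  clear_value pw
  have hpwι : ∀ i, ι (pw i) = (ι b) ^ (i + 1) := by
    intro i
    induction i with
    | zero => simp [hpw0]
    | succ i ih => rw [hpwS, map_mul, ih, ← pow_succ]
  -- x^q commutes with ι b
  have hcommq : Commute (x ^ q) (ι b) := by rw [hqdef] at hDb ⊢; exact key m b hDb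
  have hcq : ∀ i : ℕ, x ^ (q * i) * ι b = ι b * x ^ (q * i) := by
    intro i
    rw [pow_mul]
    exact (hcommq.pow_left i)
  -- v powers
  have hv_pow : ∀ i, v ^ (i + 1) = ι (pw i) * x ^ (q * (i + 1)) := by
    intro i
    induction i with
    | zero => simp [hvdef, hpw0]
    | succ i ih =>
      calc v ^ (i + 1 + 1) = v ^ (i + 1) * v := pow_succ v (i + 1)
        _ = ι (pw i) * x ^ (q * (i + 1)) * (ι b * x ^ q) := by rw [ih, hvdef]
        _ = ι (pw i) * x ^ (q * (i + 1)) * ι b * x ^ q :=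
            (mul_assoc _ (ι b) (x ^ q)).symm
        _ = ι (pw i) * (x ^ (q * (i + 1)) * ι b) * x ^ q := by
            rw [mul_assoc (ι (pw i))]
        _ = ι (pw i) * (ι b * x ^ (q * (i + 1))) * x ^ q := by rw [hcq]
        _ = ι (pw i) * ι b * x ^ (q * (i + 1)) * x ^ q := by
            rw [← mul_assoc (ι (pw i)) (ι b)]
        _ = ι (pw (i + 1)) * (x ^ (q * (i + 1)) * x ^ q) := by
            rw [hpwS, map_mul, mul_assoc]
        _ = ι (pw (i + 1)) * x ^ (q * (i + 1 + 1)) := by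
            rw [← pow_add, show q * (i + 1) + q = q * (i + 1 + 1) by ring]
  -- iteration identity
  have hiter : ∀ k : ℕ, s = (∑ i ∈ Finset.range k, v ^ (i + 1)) + v ^ k * s := by
    intro k
    induction k with
    | zero => simp
    | succ k ih =>
      rw [Finset.sum_range_succ]
      calc s = (∑ i ∈ Finset.range k, v ^ (i + 1)) + v ^ k * s := ih
        _ = (∑ i ∈ Finset.range k, v ^ (i + 1)) + v ^ k * (v + v * s) := by rw [← hsv]
        _ = (∑ i ∈ Finset.range k, v ^ (i + 1)) + v ^ (k + 1) + v ^ (k + 1) * s := by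
            rw [mul_add, ← mul_assoc (v ^ k) v s, ← pow_succ, ← add_assoc]
  -- choose large exponent
  set M := N + n + m + 1 with hM
  clear_value M
  set k := p ^ M with hk
  clear_value k
  have hkpos : 0 < k := by rw [hk]; exact pow_pos (by omega) M
  set K := q * k with hKdef
  clear_value K
  have hMK : M < K := by
    calc M < 2 ^ M := Nat.lt_two_pow_self
      _ ≤ p ^ M := Nat.pow_le_pow_left hp2 M
      _ = k := hk.symm
      _ ≤ q * k := Nat.le_mul_of_pos_left k hqpos
      _ = K := hKdef.symm
  have hnK : n < K := by omega
  have hNK : N ≤ K := by omega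
  have hK1 : 1 ≤ K := by omega
  have hKp : K = p ^ (m + M) := by rw [hKdef, hqdef, hk, ← pow_add]
  have hcommK : ∀ r ∈ T', x ^ K * ι r = ι r * x ^ K := by
    intro r hr
    rw [hKp]
    exact key (m + M) r (hDle r N (p ^ (m + M)) (by rw [← hKp]; exact hNK) (hN r hr))
  -- v^k * s expansion
  have hvk : v ^ k = ι (pw (k - 1)) * x ^ K := by
    have h1 := hv_pow (k - 1)
    rw [show k - 1 + 1 = k by omega] at h1
    rw [h1, ← hKdef]
  have hvks : v ^ k * s = ∑ i ∈ Finset.range (n + 1), ι (pw (k - 1) * c i) * x ^ (K + i) := by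
    rw [hvk, hs, Finset.mul_sum]
    refine Finset.sum_congr rfl fun i _ => ?_
    calc ι (pw (k - 1)) * x ^ K * (ι (c i) * x ^ i)
        = ι (pw (k - 1)) * x ^ K * ι (c i) * x ^ i := (mul_assoc _ (ι (c i)) (x ^ i)).symm
      _ = ι (pw (k - 1)) * (x ^ K * ι (c i)) * x ^ i := by rw [mul_assoc (ι (pw (k - 1)))]
      _ = ι (pw (k - 1)) * (ι (c i) * x ^ K) * x ^ i := by rw [hcommK (c i) (hcT' i)]
      _ = ι (pw (k - 1)) * ι (c i) * x ^ K * x ^ i := by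
          rw [← mul_assoc (ι (pw (k - 1))) (ι (c i)) (x ^ K),
            mul_assoc (ι (pw (k - 1)) * ι (c i)) (x ^ K) (x ^ i),
            ← mul_assoc (ι (pw (k - 1)) * ι (c i)) (x ^ K) (x ^ i)]
      _ = ι (pw (k - 1) * c i) * x ^ (K + i) := by
          rw [← map_mul, pow_add, mul_assoc]
  -- the coefficient function
  set coef : ℕ → R := fun j =>
    (if j ≤ n then -(c j) else 0)
    + (if 1 ≤ j ∧ j ≤ K ∧ q ∣ j then pw (j / q - 1) else 0)
    + (if K ≤ j then pw (k - 1) * c (j - K) else 0) with hcoef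
  clear_value coef
  have hsum : (∑ j ∈ Finset.range (K + n + 1), ι (coef j) * x ^ j) = 0 := by
    have hsplit : ∀ j, ι (coef j) * x ^ j =
        (ι (if j ≤ n then -(c j) else 0)) * x ^ j
        + (ι (if 1 ≤ j ∧ j ≤ K ∧ q ∣ j then pw (j / q - 1) else 0)) * x ^ j
        + (ι (if K ≤ j then pw (k - 1) * c (j - K) else 0)) * x ^ j := by
      intro j
      simp only [hcoef, map_add, add_mul]
    rw [Finset.sum_congr rfl fun j _ => hsplit j, Finset.sum_add_distrib,
      Finset.sum_add_distrib]
    have e1 : (∑ j ∈ Finset.range (K + n + 1),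
        (ι (if j ≤ n then -(c j) else 0)) * x ^ j) = -s := by
      have hvan : ∀ j ∈ Finset.range (K + n + 1), j ∉ Finset.range (n + 1) →
          (ι (if j ≤ n then -(c j) else 0)) * x ^ j = 0 := by
        intro j _ hnj
        have hj' : ¬ (j ≤ n) := by
          simp only [Finset.mem_range, Nat.lt_succ_iff] at hnj
          exact hnj
        rw [if_neg hj', map_zero, zero_mul]
      rw [← Finset.sum_subset (Finset.range_subset_range.mpr (by omega) :
          Finset.range (n + 1) ⊆ Finset.range (K + n + 1)) hvan]
      rw [hs, ← Finset.sum_neg_distrib]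
      refine Finset.sum_congr rfl fun j hj => ?_
      rw [if_pos (Nat.lt_succ_iff.mp (Finset.mem_range.mp hj)), map_neg, neg_mul]
    have e2 : (∑ j ∈ Finset.range (K + n + 1),
        (ι (if 1 ≤ j ∧ j ≤ K ∧ q ∣ j then pw (j / q - 1) else 0)) * x ^ j)
        = ∑ i ∈ Finset.range k, ι (pw i) * x ^ (q * (i + 1)) := by
      have hsub : (Finset.range k).image (fun i => q * (i + 1)) ⊆
          Finset.range (K + n + 1) := by
        intro j hj
        obtain ⟨i, hi, rfl⟩ := Finset.mem_image.mp hj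
        have hik : i < k := Finset.mem_range.mp hi
        have h1 : q * (i + 1) ≤ q * k := Nat.mul_le_mul_left q (by omega)
        rw [Finset.mem_range]
        have h2 : q * k = K := hKdef.symm
        omega
      have hvan : ∀ j ∈ Finset.range (K + n + 1),
          j ∉ (Finset.range k).image (fun i => q * (i + 1)) →
          (ι (if 1 ≤ j ∧ j ≤ K ∧ q ∣ j then pw (j / q - 1) else 0)) * x ^ j = 0 := by
        intro j _ hnj
        have hcond : ¬ (1 ≤ j ∧ j ≤ K ∧ q ∣ j) := by
          rintro ⟨h1, h2, t, ht⟩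
          apply hnj
          have htpos : 1 ≤ t := by
            rcases Nat.eq_zero_or_pos t with rfl | h
            · rw [mul_zero] at ht; omega
            · exact h
          have hqk : q * t ≤ q * k := by rw [← ht, ← hKdef]; exact h2
          have htk : t ≤ k := Nat.le_of_mul_le_mul_left hqk hqpos
          refine Finset.mem_image.mpr ⟨t - 1, Finset.mem_range.mpr (by omega), ?_⟩
          simpa [show t - 1 + 1 = t from by omega] using ht.symm
        rw [if_neg hcond, map_zero, zero_mul]
      rw [← Finset.sum_subset hsub hvan,
        Finset.sum_image (fun i _ j _ h => by
          have := Nat.eq_of_mul_eq_mul_left hqpos h; omega)]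
      refine Finset.sum_congr rfl fun i hi => ?_
      have hik : i < k := Finset.mem_range.mp hi
      have hcond : 1 ≤ q * (i + 1) ∧ q * (i + 1) ≤ K ∧ q ∣ q * (i + 1) := by
        refine ⟨Nat.mul_pos hqpos (Nat.succ_pos i), ?_, dvd_mul_right q (i + 1)⟩
        rw [hKdef]
        exact Nat.mul_le_mul_left q (by omega)
      simp [hcond, Nat.mul_div_cancel_left (i + 1) hqpos]
    have e3 : (∑ j ∈ Finset.range (K + n + 1),
        (ι (if K ≤ j then pw (k - 1) * c (j - K) else 0)) * x ^ j)
        = ∑ i ∈ Finset.range (n + 1), ι (pw (k - 1) * c i) * x ^ (K + i) := by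
      rw [show K + n + 1 = K + (n + 1) by omega, Finset.sum_range_add]
      have hz1 : (∑ j ∈ Finset.range K,
          (ι (if K ≤ j then pw (k - 1) * c (j - K) else 0)) * x ^ j) = 0 := by
        refine Finset.sum_eq_zero fun j hj => ?_
        have hj' : ¬ K ≤ j := Nat.not_le.mpr (Finset.mem_range.mp hj)
        rw [if_neg hj', map_zero, zero_mul]
      rw [hz1, zero_add]
      refine Finset.sum_congr rfl fun i _ => ?_
      have hKi : K ≤ K + i := Nat.le_add_right K i
      simp [hKi, Nat.add_sub_cancel_left]
    rw [e1, e2, e3, ← hvks]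
    have h9 := hiter k
    rw [Finset.sum_congr rfl fun i _ => hv_pow i] at h9
    nth_rewrite 1 [h9]
    abel
  have hz := hfree (K + n) coef hsum
  have h3 : c 0 = 0 := by
    have h0 := hz 0 (by omega)
    simp only [hcoef] at h0
    rw [if_pos (Nat.zero_le n), if_neg (by simp), if_neg (by omega)] at h0
    simpa using h0
  have h2 : pw (k - 1) + pw (k - 1) * c 0 = 0 := by
    have h0 := hz K (by omega)
    simp only [hcoef] at h0
    rw [if_neg (by omega),
      if_pos ⟨hK1, le_refl K, (by rw [hKdef]; exact dvd_mul_right q k : q ∣ K)⟩,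
      if_pos (le_refl K)] at h0
    rw [hKdef, Nat.mul_div_cancel_left k hqpos, Nat.sub_self] at h0
    simpa using h0
  have hpwz : pw (k - 1) = 0 := by
    rw [h3, mul_zero, add_zero] at h2
    exact h2
  have hιb : (ι b) ^ k = 0 := by
    have h5 := hpwι (k - 1)
    rw [hpwz, map_zero, show k - 1 + 1 = k by omega] at h5
    exact h5.symm
  refine ⟨k, hkpos, ?_⟩
  rw [hb] at hιb
  rcases Nat.even_or_odd k with he | ho
  · rwa [he.neg_pow] at hιb
  · rw [ho.neg_pow, neg_eq_zero] at hιb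
    exact hιb
end

section
/- Let F be an infinite field, A' = F⟨a,b,x⟩ the free associative F-algebra, P the smallest subalgebra containing a, b and closed under c ↦ xc − cx, and D : P → P the derivation D(c) = xc − cx. Then the map f : P[y;D] → A' defined F-linearly by f(p y^i) = p x^i for p ∈ P is an injective ring homomorphism. -/
/-- `P`: the smallest `F`-subalgebra of `F⟨a,b,x⟩` containing `a, b` and closed under
`c ↦ xc − cx`. -/
def Psub (F : Type*) [Field F] : Subalgebra F (FreeAlgebra F (Fin 3)) :=
  sInf {S : Subalgebra F (FreeAlgebra F (Fin 3)) |
    FreeAlgebra.ι F (0 : Fin 3) ∈ S ∧ FreeAlgebra.ι F (1 : Fin 3) ∈ S ∧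
    ∀ c ∈ S, FreeAlgebra.ι F (2 : Fin 3) * c - c * FreeAlgebra.ι F (2 : Fin 3) ∈ S}

namespace Stmt11

variable {F : Type*} [Field F]

local notation "A'" => FreeAlgebra F (Fin 3)

lemma Psub_closed {c : FreeAlgebra F (Fin 3)} (hc : c ∈ Psub F) :
    FreeAlgebra.ι F (2 : Fin 3) * c - c * FreeAlgebra.ι F (2 : Fin 3) ∈ Psub F := by
  rw [Psub, Algebra.mem_sInf] at hc ⊢
  intro S hS
  exact hS.2.2 c (hc S hS)

/-- The derivation `D : P → P`, `D c = xc - cx`. -/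
def Dmap (F : Type*) [Field F] (p : Psub F) : Psub F :=
  ⟨FreeAlgebra.ι F (2 : Fin 3) * p - p * FreeAlgebra.ι F (2 : Fin 3), Psub_closed p.2⟩

@[simp] lemma Dmap_coe (p : Psub F) :
    (Dmap F p : FreeAlgebra F (Fin 3))
      = FreeAlgebra.ι F (2 : Fin 3) * p - p * FreeAlgebra.ι F (2 : Fin 3) := rfl

@[simp] lemma Dmap_zero : Dmap F 0 = 0 := by
  apply Subtype.ext; simp

lemma Dmap_nsmul (n : ℕ) (p : Psub F) : Dmap F (n • p) = n • Dmap F p := by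
  apply Subtype.ext
  simp only [Dmap_coe, AddSubmonoidClass.coe_nsmul]
  rw [smul_sub, mul_smul_comm, smul_mul_assoc]

section Generic

variable {R : Type*} [Ring R] [Algebra F R]

/-- padding lemma -/
lemma sum_pad (J : Psub F → R) (hJ : J 0 = 0) (Y : R) {n N : ℕ} (h : n ≤ N) (c : ℕ → Psub F) :
    ∑ i ∈ Finset.range (N + 1), J (if i ≤ n then c i else 0) * Y ^ i
      = ∑ i ∈ Finset.range (n + 1), J (c i) * Y ^ i := by
  have hsub : Finset.range (n + 1) ⊆ Finset.range (N + 1) :=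
    Finset.range_subset_range.mpr (by omega)
  rw [← Finset.sum_subset hsub
    (fun i _ hi => by
      rw [if_neg (by simp only [Finset.mem_range] at hi; omega), hJ, zero_mul])]
  exact Finset.sum_congr rfl fun i hi => by
    rw [if_pos (Nat.lt_succ_iff.mp (Finset.mem_range.mp hi))]

/-- key commutation lemma -/
lemma key (J : Psub F →ₐ[F] R) (Y : R)
    (hY : ∀ p, Y * J p = J p * Y + J (Dmap F p)) (i : ℕ) (d : Psub F) :
    Y ^ i * J d = ∑ k ∈ Finset.range (i + 1),
      J ((i.choose k) • (Dmap F)^[i - k] d) * Y ^ k := by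
  induction i with
  | zero => simp
  | succ i ih =>
    set e : ℕ → Psub F := fun k => (i.choose k) • (Dmap F)^[i - k] d with he
    have hsplit : ∀ k, Y * (J (e k) * Y ^ k)
        = J (e k) * Y ^ (k + 1) + J (Dmap F (e k)) * Y ^ k := by
      intro k
      rw [← mul_assoc, hY, add_mul, mul_assoc, ← pow_succ']
    have hL : Y ^ (i + 1) * J d
        = (∑ k ∈ Finset.range (i + 1), J (e k) * Y ^ (k + 1))
          + ∑ k ∈ Finset.range (i + 1), J (Dmap F (e k)) * Y ^ k := by
      rw [pow_succ', mul_assoc, ih, Finset.mul_sum, ← Finset.sum_add_distrib]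
      exact Finset.sum_congr rfl fun k _ => hsplit k
    have h2 : (∑ k ∈ Finset.range (i + 1), J (Dmap F (e k)) * Y ^ k)
        = (∑ k ∈ Finset.range (i + 1), J (Dmap F (e (k + 1))) * Y ^ (k + 1))
          + J (Dmap F (e 0)) * Y ^ 0 := by
      have hz : (∑ k ∈ Finset.range (i + 2), J (Dmap F (e k)) * Y ^ k)
          = ∑ k ∈ Finset.range (i + 1), J (Dmap F (e k)) * Y ^ k := by
        rw [Finset.sum_range_succ]
        have h0 : e (i + 1) = 0 := by simp [he, Nat.choose_succ_self]
        simp [h0]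
      rw [← hz, Finset.sum_range_succ']
    rw [hL, h2, ← add_assoc, ← Finset.sum_add_distrib]
    conv_rhs => rw [Finset.sum_range_succ']
    congr 1
    · refine Finset.sum_congr rfl fun k hk => ?_
      have hk' : k ≤ i := Nat.lt_succ_iff.mp (Finset.mem_range.mp hk)
      have hA : (i + 1).choose (k + 1) • (Dmap F)^[i + 1 - (k + 1)] d
          = e k + Dmap F (e (k + 1)) := by
        have h1 : i + 1 - (k + 1) = i - k := by omega
        rw [h1, Nat.choose_succ_succ, add_smul]
        congr 1
        simp only [he]
        rw [Dmap_nsmul]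
        rcases eq_or_lt_of_le hk' with rfl | hki
        · simp [Nat.choose_succ_self]
        · have h2' : i - k = (i - (k + 1)) + 1 := by omega
          rw [h2', Function.iterate_succ_apply']
      rw [hA, map_add, add_mul]
    · have hB : (i + 1).choose 0 • (Dmap F)^[i + 1 - 0] d = Dmap F (e 0) := by
        simp only [he, Nat.choose_zero_right, one_smul, Nat.sub_zero]
        exact Function.iterate_succ_apply' (Dmap F) i d
      rw [hB]

/-- standard-form predicate -/
def IsStd (J : Psub F →ₐ[F] R) (Y : R) (z : R) : Prop :=
  ∃ (n : ℕ) (c : ℕ → Psub F), z = ∑ i ∈ Finset.range (n + 1), J (c i) * Y ^ i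

variable (J : Psub F →ₐ[F] R) (Y : R)

lemma isStd_zero : IsStd J Y 0 := ⟨0, 0, by simp⟩

lemma isStd_single (p : Psub F) (i : ℕ) : IsStd J Y (J p * Y ^ i) := by
  refine ⟨i, fun k => if k = i then p else 0, ?_⟩
  rw [Finset.sum_eq_single_of_mem i (Finset.self_mem_range_succ i)
    (fun k _ hk => by simp [hk])]
  simp

lemma isStd_one : IsStd J Y 1 := by
  have := isStd_single J Y 1 0
  simpa using this

lemma isStd_algebraMap (r : F) : IsStd J Y (algebraMap F R r) := by
  have := isStd_single J Y (algebraMap F (Psub F) r) 0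
  simpa [AlgHom.commutes] using this

lemma isStd_add {z w : R} (hz : IsStd J Y z) (hw : IsStd J Y w) : IsStd J Y (z + w) := by
  obtain ⟨n, c, rfl⟩ := hz
  obtain ⟨m, d, rfl⟩ := hw
  refine ⟨max n m, fun i => (if i ≤ n then c i else 0) + (if i ≤ m then d i else 0), ?_⟩
  rw [← sum_pad (fun p => J p) (map_zero J) Y (le_max_left n m) c,
    ← sum_pad (fun p => J p) (map_zero J) Y (le_max_right n m) d,
    ← Finset.sum_add_distrib]
  exact Finset.sum_congr rfl fun i _ => by rw [map_add, add_mul]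

lemma isStd_sum {ι : Type*} (s : Finset ι) (g : ι → R) (hg : ∀ a ∈ s, IsStd J Y (g a)) :
    IsStd J Y (∑ a ∈ s, g a) :=
  Finset.sum_induction g _ (fun _ _ => isStd_add J Y) (isStd_zero J Y) hg

lemma isStd_mulY {z : R} (hz : IsStd J Y z) : IsStd J Y (z * Y) := by
  obtain ⟨n, c, rfl⟩ := hz
  refine ⟨n + 1, fun i => if i = 0 then 0 else c (i - 1), ?_⟩
  rw [Finset.sum_mul,
    Finset.sum_range_succ' (fun i => J (if i = 0 then 0 else c (i - 1)) * Y ^ i) (n + 1)]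
  simp only [Nat.succ_ne_zero, ite_false, Nat.add_sub_cancel, ite_true, map_zero, zero_mul,
    add_zero]
  exact Finset.sum_congr rfl fun k _ => by rw [mul_assoc, ← pow_succ]

variable (hY : ∀ p, Y * J p = J p * Y + J (Dmap F p))

include hY in
lemma isStd_mulJ {z : R} (hz : IsStd J Y z) (p : Psub F) : IsStd J Y (z * J p) := by
  obtain ⟨n, c, rfl⟩ := hz
  rw [Finset.sum_mul]
  refine isStd_sum J Y _ _ fun i _ => ?_
  rw [mul_assoc, key J Y hY i p, Finset.mul_sum]
  refine isStd_sum J Y _ _ fun k _ => ?_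
  rw [← mul_assoc, ← map_mul]
  exact isStd_single J Y _ k

lemma isStd_mulYpow {z : R} (hz : IsStd J Y z) (k : ℕ) : IsStd J Y (z * Y ^ k) := by
  induction k with
  | zero => simpa using hz
  | succ k ihk =>
    have := isStd_mulY J Y ihk
    rwa [mul_assoc, ← pow_succ] at this

include hY in
lemma isStd_mul {z w : R} (hz : IsStd J Y z) (hw : IsStd J Y w) : IsStd J Y (z * w) := by
  obtain ⟨m, d, rfl⟩ := hw
  rw [Finset.mul_sum]
  refine isStd_sum J Y _ _ fun k _ => ?_
  rw [← mul_assoc]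
  exact isStd_mulYpow J Y (isStd_mulJ J Y hY hz (d k)) k

end Generic

section Poly

open Polynomial

noncomputable def Phi (F : Type*) [Field F] :
    FreeAlgebra F (Fin 3) →ₐ[F] Polynomial (FreeAlgebra F (Fin 3)) :=
  FreeAlgebra.lift F (fun i => Polynomial.C (FreeAlgebra.ι F i) +
    if i = 2 then Polynomial.X else 0)

lemma Phi_fix (p : Psub F) : Phi F (p : FreeAlgebra F (Fin 3)) = Polynomial.C ↑p := by
  have hle : Psub F ≤ AlgHom.equalizer (Phi F) (Polynomial.CAlgHom (R := F)) := by
    apply sInf_le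
    refine ⟨?_, ?_, ?_⟩
    · show Phi F (FreeAlgebra.ι F 0) = Polynomial.CAlgHom (FreeAlgebra.ι F (0 : Fin 3))
      rw [Phi, FreeAlgebra.lift_ι_apply]
      simp [Polynomial.CAlgHom]
    · show Phi F (FreeAlgebra.ι F 1) = Polynomial.CAlgHom (FreeAlgebra.ι F (1 : Fin 3))
      rw [Phi, FreeAlgebra.lift_ι_apply]
      simp [Polynomial.CAlgHom]
    · intro c hc
      have hc' : Phi F c = Polynomial.C c := hc
      show Phi F _ = Polynomial.CAlgHom _
      have hx : Phi F (FreeAlgebra.ι F (2 : Fin 3)) = Polynomial.C (FreeAlgebra.ι F 2) + X := by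
        rw [Phi, FreeAlgebra.lift_ι_apply]; simp
      show Phi F _ = Polynomial.C _
      rw [map_sub, map_mul, map_mul, hx, hc', map_sub, map_mul, map_mul]
      rw [add_mul, mul_add, Polynomial.X_mul]
      abel
  exact hle p.2

lemma coeff_top (n : ℕ) (c : ℕ → Psub F)
    (h : ∑ i ∈ Finset.range (n + 1),
      (c i : FreeAlgebra F (Fin 3)) * FreeAlgebra.ι F (2 : Fin 3) ^ i = 0) :
    c n = 0 := by
  set q : Polynomial (FreeAlgebra F (Fin 3)) := X + Polynomial.C (FreeAlgebra.ι F 2) with hq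
  have hmono : q.Monic := Polynomial.monic_X_add_C _
  have hdeg : q.natDegree = 1 := Polynomial.natDegree_X_add_C _
  have hΦ : (0 : Polynomial (FreeAlgebra F (Fin 3)))
      = ∑ i ∈ Finset.range (n + 1), Polynomial.C (c i : FreeAlgebra F (Fin 3)) * q ^ i := by
    have := congrArg (Phi F) h
    rw [map_sum, map_zero] at this
    rw [← this]
    refine Finset.sum_congr rfl fun i _ => ?_
    rw [map_mul, map_pow, Phi_fix]
    congr 1
    rw [Phi, FreeAlgebra.lift_ι_apply]
    simp [hq, add_comm]
  have hcoeff := congrArg (fun P => Polynomial.coeff P n) hΦ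
  simp only [Polynomial.coeff_zero, Polynomial.finset_sum_coeff, Polynomial.coeff_C_mul] at hcoeff
  rw [Finset.sum_eq_single_of_mem n (Finset.self_mem_range_succ n)
    (fun i hi hne => by
      have hlt : i < n := by
        have := Finset.mem_range.mp hi; omega
      rw [Polynomial.coeff_eq_zero_of_natDegree_lt
        (by rw [hmono.natDegree_pow, hdeg, mul_one]; exact hlt), mul_zero]) ] at hcoeff
  have h1 : (q ^ n).coeff n = 1 := by
    have hd : (q ^ n).natDegree = n := by rw [hmono.natDegree_pow, hdeg, mul_one]
    have h2 := (hmono.pow n).coeff_natDegree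
    rwa [hd] at h2
  rw [h1, mul_one] at hcoeff
  exact Subtype.ext hcoeff.symm

lemma indepA (n : ℕ) (c : ℕ → Psub F)
    (h : ∑ i ∈ Finset.range (n + 1),
      (c i : FreeAlgebra F (Fin 3)) * FreeAlgebra.ι F (2 : Fin 3) ^ i = 0) :
    ∀ i ≤ n, c i = 0 := by
  induction n with
  | zero =>
    intro i hi
    interval_cases i
    have := coeff_top 0 c h
    exact this
  | succ n ih =>
    have htop : c (n + 1) = 0 := coeff_top (n + 1) c h
    rw [Finset.sum_range_succ, htop] at h
    simp only [ZeroMemClass.coe_zero, zero_mul, add_zero] at h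
    intro i hi
    rcases Nat.lt_succ_iff_lt_or_eq.mp (Nat.lt_succ_of_le hi) with h' | rfl
    · exact ih h i (by omega)
    · exact htop

end Poly

end Stmt11

/-- Let `F` be an infinite field and `D(c) = xc − cx` the derivation on `P`.
If `T` is (a copy of) the differential polynomial ring `P[y;D]` — i.e. an `F`-algebra
with an embedding `j : P → T` and an element `y` satisfying `y·j(p) − j(p)·y = j(D p)`
such that every element of `T` is uniquely `∑ j(p_i) y^i` — then the `F`-linear map
`f : P[y;D] → F⟨a,b,x⟩` with `f(p y^i) = p x^i` is an injective algebra homomorphism. -/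
theorem stmt_11 (F : Type*) [Field F] [Infinite F]
    (T : Type*) [Ring T] [Algebra F T]
    (j : (Psub F) →ₐ[F] T) (y : T)
    (hrel : ∀ p q : Psub F,
      (q : FreeAlgebra F (Fin 3)) =
          FreeAlgebra.ι F (2 : Fin 3) * (p : FreeAlgebra F (Fin 3)) -
            (p : FreeAlgebra F (Fin 3)) * FreeAlgebra.ι F (2 : Fin 3) →
        y * j p - j p * y = j q)
    (hspan : ∀ t : T, ∃ (n : ℕ) (c : ℕ → Psub F),
      t = ∑ i ∈ Finset.range (n + 1), j (c i) * y ^ i)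
    (hfree : ∀ (n : ℕ) (c : ℕ → Psub F),
      (∑ i ∈ Finset.range (n + 1), j (c i) * y ^ i) = 0 → ∀ i ≤ n, c i = 0) :
    ∃ f : T →ₐ[F] FreeAlgebra F (Fin 3), Function.Injective f ∧
      ∀ (p : Psub F) (i : ℕ),
        f (j p * y ^ i) = (p : FreeAlgebra F (Fin 3)) * FreeAlgebra.ι F (2 : Fin 3) ^ i := by
  classical
  set A := FreeAlgebra F (Fin 3)
  set x : A := FreeAlgebra.ι F (2 : Fin 3) with hxdef
  -- the product algebra and the "graph" standard forms
  set J : Psub F →ₐ[F] T × A := AlgHom.prod j (Psub F).val with hJdef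
  set Y : T × A := (y, x) with hYdef
  have hJ1 : ∀ p : Psub F, (J p).1 = j p := fun p => rfl
  have hJ2 : ∀ p : Psub F, (J p).2 = (p : A) := fun p => rfl
  have hYJ : ∀ p : Psub F, Y * J p = J p * Y + J (Stmt11.Dmap F p) := by
    intro p
    have h1 : y * j p = j p * y + j (Stmt11.Dmap F p) := by
      have := hrel p (Stmt11.Dmap F p) rfl
      rw [sub_eq_iff_eq_add] at this
      rw [this, add_comm]
    have h2 : x * (p : A) = (p : A) * x + (Stmt11.Dmap F p : A) := by
      rw [Stmt11.Dmap_coe, ← hxdef]; abel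
    exact Prod.ext_iff.mpr ⟨h1, h2⟩
  -- components of standard sums
  have hpair : ∀ (n : ℕ) (c : ℕ → Psub F),
      (∑ i ∈ Finset.range (n + 1), J (c i) * Y ^ i)
        = (∑ i ∈ Finset.range (n + 1), j (c i) * y ^ i,
           ∑ i ∈ Finset.range (n + 1), (c i : A) * x ^ i) := by
    intro n c
    refine Prod.ext_iff.mpr ⟨?_, ?_⟩ <;>
      simp [hYdef, hJ1, hJ2, Prod.fst_sum, Prod.snd_sum, Prod.pow_fst, Prod.pow_snd,
        Prod.fst_mul, Prod.snd_mul]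
  -- existence of graph elements
  have hex : ∀ t : T, ∃ u : A, Stmt11.IsStd J Y (t, u) := by
    intro t
    obtain ⟨n, c, ht⟩ := hspan t
    exact ⟨∑ i ∈ Finset.range (n + 1), (c i : A) * x ^ i, n, c,
      by rw [hpair n c, ← ht]⟩
  -- coefficient uniqueness in T
  have hcoef : ∀ (n m : ℕ) (c d : ℕ → Psub F),
      (∑ i ∈ Finset.range (n + 1), j (c i) * y ^ i)
        = (∑ i ∈ Finset.range (m + 1), j (d i) * y ^ i) →
      ∀ i, (if i ≤ n then c i else 0) = (if i ≤ m then d i else 0) := by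
    intro n m c d h i
    set N := max n m with hN
    set pc : ℕ → Psub F := fun i => if i ≤ n then c i else 0 with hpc
    set pd : ℕ → Psub F := fun i => if i ≤ m then d i else 0 with hpd
    have h1 : (∑ i ∈ Finset.range (N + 1), j (pc i) * y ^ i)
        = ∑ i ∈ Finset.range (N + 1), j (pd i) * y ^ i := by
      rw [hpc, hpd, Stmt11.sum_pad (fun p => j p) (map_zero j) y (le_max_left n m) c,
        Stmt11.sum_pad (fun p => j p) (map_zero j) y (le_max_right n m) d]
      exact h
    have h2 : (∑ i ∈ Finset.range (N + 1), j (pc i - pd i) * y ^ i) = 0 := by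
      simp only [map_sub, sub_mul, Finset.sum_sub_distrib, h1, sub_self]
    have h3 := hfree N _ h2
    by_cases hi : i ≤ N
    · exact sub_eq_zero.mp (h3 i hi)
    · rw [if_neg (by omega), if_neg (by omega)]
  -- uniqueness of graph second coordinates
  have huniq : ∀ (t : T) (u u' : A),
      Stmt11.IsStd J Y (t, u) → Stmt11.IsStd J Y (t, u') → u = u' := by
    intro t u u' h1 h2
    obtain ⟨n, c, hc⟩ := h1
    obtain ⟨m, d, hd⟩ := h2
    rw [hpair, Prod.mk.injEq] at hc hd
    obtain ⟨hc1, hc2⟩ := hc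
    obtain ⟨hd1, hd2⟩ := hd
    have hcd := hcoef n m c d (hc1.symm.trans hd1)
    have e2 : u = ∑ i ∈ Finset.range (max n m + 1),
        ((if i ≤ n then c i else 0 : Psub F) : A) * x ^ i := by
      rw [Stmt11.sum_pad (fun p : Psub F => (p : A))
        (by simp) x (le_max_left n m) c]
      exact hc2
    have e3 : u' = ∑ i ∈ Finset.range (max n m + 1),
        ((if i ≤ m then d i else 0 : Psub F) : A) * x ^ i := by
      rw [Stmt11.sum_pad (fun p : Psub F => (p : A))
        (by simp) x (le_max_right n m) d]
      exact hd2
    rw [e2, e3]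
    exact Finset.sum_congr rfl fun i _ => by rw [hcd i]
  -- the function
  choose f0 hf0 using hex
  have hmul : ∀ t t' : T, f0 (t * t') = f0 t * f0 t' := by
    intro t t'
    refine huniq (t * t') _ _ (hf0 (t * t')) ?_
    have := Stmt11.isStd_mul J Y hYJ (hf0 t) (hf0 t')
    rwa [Prod.mk_mul_mk] at this
  have hadd : ∀ t t' : T, f0 (t + t') = f0 t + f0 t' := by
    intro t t'
    refine huniq (t + t') _ _ (hf0 (t + t')) ?_
    have := Stmt11.isStd_add J Y (hf0 t) (hf0 t')
    rwa [Prod.mk_add_mk] at this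
  have hone : f0 1 = 1 := by
    refine huniq 1 _ 1 (hf0 1) ?_
    exact Stmt11.isStd_one J Y
  have hzero : f0 0 = 0 := by
    refine huniq 0 _ 0 (hf0 0) ?_
    exact Stmt11.isStd_zero J Y
  have halg : ∀ r : F, f0 (algebraMap F T r) = algebraMap F A r := by
    intro r
    refine huniq _ _ _ (hf0 _) ?_
    have := Stmt11.isStd_algebraMap J Y r
    rwa [show (algebraMap F (T × A) r) = (algebraMap F T r, algebraMap F A r) from rfl] at this
  set f : T →ₐ[F] A :=
    { toFun := f0
      map_one' := hone
      map_mul' := hmul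
      map_zero' := hzero
      map_add' := hadd
      commutes' := halg } with hfdef
  have hfapp : ∀ t, f t = f0 t := fun t => rfl
  -- key evaluation
  have heval : ∀ (p : Psub F) (i : ℕ), f (j p * y ^ i) = (p : A) * x ^ i := by
    intro p i
    rw [hfapp]
    refine huniq _ _ _ (hf0 _) ?_
    have := Stmt11.isStd_single J Y p i
    rwa [show (J p * Y ^ i : T × A) = (j p * y ^ i, (p : A) * x ^ i) from
      Prod.ext_iff.mpr ⟨by simp [hYdef, hJ1, Prod.pow_fst, Prod.fst_mul],
        by simp [hYdef, hJ2, Prod.pow_snd, Prod.snd_mul]⟩] at this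
  refine ⟨f, ?_, heval⟩
  -- injectivity
  have hker : ∀ t : T, f t = 0 → t = 0 := by
    intro t hft
    obtain ⟨n, c, hc⟩ := hf0 t
    rw [hpair, Prod.mk.injEq] at hc
    obtain ⟨hc1, hc2⟩ := hc
    rw [hfapp] at hft
    rw [hft] at hc2
    have hz := Stmt11.indepA n c hc2.symm
    rw [hc1]
    refine Finset.sum_eq_zero fun i hi => ?_
    rw [hz i (Nat.lt_succ_iff.mp (Finset.mem_range.mp hi)), map_zero, zero_mul]
  intro t t' h
  have : f (t - t') = 0 := by rw [map_sub, h, sub_self]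
  have := hker _ this
  exact sub_eq_zero.mp this
end

section
/- Let F be an infinite field, A' = F⟨a,b,x⟩, and P the smallest subalgebra of A' containing a, b and closed under c ↦ xc − cx. Then the sum Σ_{i≥0} P x^i is direct, i.e., if p_0 + p_1 x + ⋯ + p_n x^n = 0 with all p_i ∈ P, then p_0 = p_1 = ⋯ = p_n = 0. -/
/-- The algebra map `F⟨a,b,x⟩ → (F⟨a,b,x⟩)[X]` sending `a ↦ C a`, `b ↦ C b`,
`x ↦ X + C x`. -/
noncomputable def psi (F : Type*) [Field F] :
    FreeAlgebra F (Fin 3) →ₐ[F] Polynomial (FreeAlgebra F (Fin 3)) :=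
  FreeAlgebra.lift F
    ![Polynomial.C (FreeAlgebra.ι F 0), Polynomial.C (FreeAlgebra.ι F 1),
      Polynomial.X + Polynomial.C (FreeAlgebra.ι F 2)]

lemma psi_iota2 (F : Type*) [Field F] :
    psi F (FreeAlgebra.ι F (2 : Fin 3)) =
      Polynomial.X + Polynomial.C (FreeAlgebra.ι F (2 : Fin 3)) := by
  simp [psi]

lemma psi_fix (F : Type*) [Field F] {p : FreeAlgebra F (Fin 3)} (hp : p ∈ Psub F) :
    psi F p = Polynomial.C p := by
  have key : Psub F ≤ AlgHom.equalizer (psi F) Polynomial.CAlgHom := by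
    apply sInf_le
    refine ⟨?_, ?_, ?_⟩
    · show psi F (FreeAlgebra.ι F 0) = _
      simp [psi, Polynomial.CAlgHom]
    · show psi F (FreeAlgebra.ι F 1) = _
      simp [psi, Polynomial.CAlgHom]
    · intro d hd
      have hd' : psi F d = Polynomial.C d := hd
      show psi F _ = _
      rw [map_sub, map_mul, map_mul, hd', psi_iota2]
      show _ = Polynomial.C _
      rw [map_sub, map_mul, map_mul]
      rw [add_mul, mul_add, Polynomial.X_mul_C]
      abel
  exact key hp

/-- Over an infinite field, the sum `∑_{i≥0} P x^i` is direct: if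
`p_0 + p_1 x + ⋯ + p_n x^n = 0` with all `p_i ∈ P`, then all `p_i = 0`. -/
theorem stmt_12 (F : Type*) [Field F] [Infinite F]
    (n : ℕ) (c : ℕ → Psub F)
    (h : ∑ i ∈ Finset.range (n + 1),
      (c i : FreeAlgebra F (Fin 3)) * FreeAlgebra.ι F (2 : Fin 3) ^ i = 0) :
    ∀ i ≤ n, (c i : FreeAlgebra F (Fin 3)) = 0 := by
  have H : ∑ i ∈ Finset.range (n + 1),
      Polynomial.C (c i : FreeAlgebra F (Fin 3)) *
        (Polynomial.X + Polynomial.C (FreeAlgebra.ι F (2 : Fin 3))) ^ i = 0 := by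
    have := congrArg (psi F) h
    simp only [map_sum, map_mul, map_pow, map_zero, psi_iota2] at this
    rw [← this]
    refine Finset.sum_congr rfl fun i _ => by rw [psi_fix F (c i).2]
  -- extract coefficients
  have coeffEq : ∀ k, ∑ i ∈ Finset.range (n + 1),
      (c i : FreeAlgebra F (Fin 3)) *
        (FreeAlgebra.ι F (2 : Fin 3) ^ (i - k) * (i.choose k : FreeAlgebra F (Fin 3))) = 0 := by
    intro k
    have := congrArg (fun p => Polynomial.coeff p k) H
    simpa [Polynomial.finset_sum_coeff, Polynomial.coeff_C_mul,
      Polynomial.coeff_X_add_C_pow, mul_assoc] using this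
  -- single step: if all higher coefficients vanish, the k-th one does too
  have step : ∀ k ≤ n, (∀ j, k < j → j ≤ n → (c j : FreeAlgebra F (Fin 3)) = 0) →
      (c k : FreeAlgebra F (Fin 3)) = 0 := by
    intro k hk hhigh
    have := coeffEq k
    rw [Finset.sum_eq_single k] at this
    · simpa using this
    · intro b hb hbk
      have hb' : b < n + 1 := Finset.mem_range.mp hb
      rcases lt_or_gt_of_ne hbk with hlt | hgt
      · simp [Nat.choose_eq_zero_of_lt hlt]
      · rw [hhigh b hgt (by omega), zero_mul]
    · intro hb
      exact absurd (Finset.mem_range.mpr (by omega)) hb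
  -- downward induction
  have key : ∀ m, ∀ i, n - i ≤ m → i ≤ n → (c i : FreeAlgebra F (Fin 3)) = 0 := by
    intro m
    induction m with
    | zero =>
      intro i hm hi
      exact step i hi fun j hj hjn => by omega
    | succ m ih =>
      intro i hm hi
      exact step i hi fun j hj hjn => ih j (by omega) hjn
  exact fun i hi => key (n - i) i le_rfl hi
end
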